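/- Let X_1, X_2, … be real random variables with continuous marginal cdfs (so that X_1, …, X_n are almost surely pairwise distinct), and let Y_1, Y_2, … be identically distributed real random variables on the same probability space with E(|Y_1|^p) < ∞ for some p ≥ 1. Let Y_{t,n} = Σ_{s=1}^n Y_s·1{X_s = X_{t:n}} denote the concomitants of Y_1,…,Y_n with respect to X_1,…,X_n. If the outputs are out of p-reasonable order with respect to the inputs, i.e., B_{n,p} := n^{-1/p} Σ_{t=2}^n |Y_{t,n} − Y_{t-1,n}| → ∞ in probability, then I_n := Σ_{t=2}^n (Y_{t,n} − Y_{t-1,n})_+ / Σ_{t=2}^n |Y_{t,n} − Y_{t-1,n}| → 1/2 in probability as n → ∞. -/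

import Mathlib

open MeasureTheory ProbabilityTheory Filter
open scoped Classical

/-- The `t`-th order statistic (1-based) of `X 1, …, X n`. -/
noncomputable def orderStat {Ω : Type*} (X : ℕ → Ω → ℝ) (n t : ℕ) (ω : Ω) : ℝ :=
  (List.insertionSort (· ≤ ·) ((List.range n).map fun s => X (s + 1) ω)).getD (t - 1) 0

/-- The concomitant `Y_{t,n} = Σ_{s=1}^n Y_s · 1{X_s = X_{t:n}}`. -/
noncomputable def concomitant {Ω : Type*} (X Y : ℕ → Ω → ℝ) (n t : ℕ) (ω : Ω) : ℝ :=
  ∑ s ∈ Finset.Icc 1 n, Y s ω * (if X s ω = orderStat X n t ω then 1 else 0)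

/-- The cumulative distribution function of a random variable `X` under `P`. -/
noncomputable def cdfOf {Ω : Type*} [MeasurableSpace Ω] (P : Measure Ω) (X : Ω → ℝ) : ℝ → ℝ :=
  fun x => (P {ω | X ω ≤ x}).toReal

/-- Convergence in probability of `Z n` to the constant `c`. -/
def TendstoInProb {Ω : Type*} [MeasurableSpace Ω] (P : Measure Ω)
    (Z : ℕ → Ω → ℝ) (c : ℝ) : Prop :=
  ∀ ε : ℝ, 0 < ε → Tendsto (fun n => P {ω | ε ≤ |Z n ω - c|}) atTop (nhds 0)

/-- Convergence in probability of `Z n` to `+∞`. -/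
def TendstoInProbAtTop {Ω : Type*} [MeasurableSpace Ω] (P : Measure Ω)
    (Z : ℕ → Ω → ℝ) : Prop :=
  ∀ M : ℝ, Tendsto (fun n => P {ω | Z n ω ≤ M}) atTop (nhds 0)

open scoped ENNReal Topology

lemma tail_tendsto {Ω : Type*} [MeasurableSpace Ω] (P : Measure Ω) [IsProbabilityMeasure P]
    (W : Ω → ℝ) (hW : Measurable W) (hint : Integrable W P)
    (c : ℝ) (hc : 0 < c) :
    Tendsto (fun n : ℕ => (n : ℝ≥0∞) * P {ω | c * n ≤ W ω}) atTop (𝓝 0) := by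
  set s : ℕ → Set Ω := fun n => {ω | c * n ≤ W ω} with hs
  have hms : ∀ n, MeasurableSet (s n) := fun n => measurableSet_le measurable_const hW
  have hanti : Antitone s := by
    intro m n hmn ω hω
    have : c * m ≤ c * n := by
      have h : (m:ℝ) ≤ n := Nat.cast_le.mpr hmn
      nlinarith
    exact le_trans this hω
  have hmeas0 : Tendsto (fun n => P (s n)) atTop (𝓝 0) := by
    have h1 : Tendsto (P ∘ s) atTop (𝓝 (P (⋂ n, s n))) :=
      tendsto_measure_iInter_atTop (fun n => (hms n).nullMeasurableSet) hanti
        ⟨0, (measure_lt_top P _).ne⟩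
    have h2 : (⋂ n, s n) = ∅ := by
      ext ω
      simp only [Set.mem_iInter, Set.mem_empty_iff_false, iff_false, not_forall]
      obtain ⟨n, hn⟩ := exists_nat_gt (W ω / c)
      refine ⟨n, ?_⟩
      simp only [hs, Set.mem_setOf_eq, not_le]
      rw [div_lt_iff₀ hc] at hn
      linarith
    rw [h2, measure_empty] at h1
    exact h1
  have hfin : ∫⁻ ω, ENNReal.ofReal (W ω) ∂P ≠ ⊤ := hint.lintegral_lt_top.ne
  have hsi : Tendsto (fun n => ∫⁻ ω in s n, ENNReal.ofReal (W ω) ∂P) atTop (𝓝 0) :=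
    tendsto_setLIntegral_zero hfin hmeas0
  have hbound : ∀ n : ℕ, (n : ℝ≥0∞) * P (s n) ≤
      (ENNReal.ofReal c)⁻¹ * ∫⁻ ω in s n, ENNReal.ofReal (W ω) ∂P := by
    intro n
    have h1 : ENNReal.ofReal (c * n) * P (s n) ≤ ∫⁻ ω in s n, ENNReal.ofReal (W ω) ∂P := by
      rw [← setLIntegral_const (s n) (ENNReal.ofReal (c * n))]
      refine setLIntegral_mono hW.ennreal_ofReal fun ω hω => ENNReal.ofReal_le_ofReal hω
    have h2 : ENNReal.ofReal (c * n) = ENNReal.ofReal c * (n : ℝ≥0∞) := by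
      rw [ENNReal.ofReal_mul hc.le, ENNReal.ofReal_natCast]
    calc (n : ℝ≥0∞) * P (s n)
        = (ENNReal.ofReal c)⁻¹ * (ENNReal.ofReal c * (n : ℝ≥0∞) * P (s n)) := by
          rw [← mul_assoc, ← mul_assoc, ENNReal.inv_mul_cancel (ENNReal.ofReal_pos.mpr hc).ne'
            ENNReal.ofReal_ne_top, one_mul]
      _ ≤ (ENNReal.ofReal c)⁻¹ * ∫⁻ ω in s n, ENNReal.ofReal (W ω) ∂P := by
          rw [← h2]; exact mul_le_mul_right h1 _
  have hlim : Tendsto (fun n => (ENNReal.ofReal c)⁻¹ * ∫⁻ ω in s n, ENNReal.ofReal (W ω) ∂P)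
      atTop (𝓝 0) := by
    have := ENNReal.Tendsto.const_mul hsi
      (Or.inr (ENNReal.inv_ne_top.mpr (ENNReal.ofReal_pos.mpr hc).ne'))
    simpa using this
  exact tendsto_of_tendsto_of_tendsto_of_le_of_le tendsto_const_nhds hlim
    (fun n => zero_le) hbound

lemma telescope_sum (f : ℕ → ℝ) : ∀ n : ℕ, 1 ≤ n →
    ∑ t ∈ Finset.Icc 2 n, (f t - f (t - 1)) = f n - f 1 := by
  intro n hn
  induction n with
  | zero => omega
  | succ m ih =>
    rcases Nat.eq_or_lt_of_le hn with h | h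
    · simp [← h]
    · have hm : 1 ≤ m := by omega
      have : Finset.Icc 2 (m + 1) = insert (m + 1) (Finset.Icc 2 m) := by
        ext x; simp [Finset.mem_Icc]; omega
      rw [this, Finset.sum_insert (by simp), ih hm]
      have hred : m + 1 - 1 = m := by omega
      rw [hred]; ring

lemma max_half (x : ℝ) : max x 0 = (x + |x|) / 2 := by
  rcases le_or_gt 0 x with h | h
  · rw [max_eq_left h, abs_of_nonneg h]; ring
  · rw [max_eq_right h.le, abs_of_neg h]; ring

lemma orderStat_mem {Ω : Type*} (X : ℕ → Ω → ℝ) (n t : ℕ) (ω : Ω)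
    (h1 : 1 ≤ t) (h2 : t ≤ n) :
    ∃ s ∈ Finset.Icc 1 n, X s ω = orderStat X n t ω := by
  rw [orderStat]
  set L : List ℝ := (List.range n).map fun s => X (s + 1) ω with hL
  have hlen : (List.insertionSort (· ≤ ·) L).length = n := by
    rw [List.length_insertionSort, hL, List.length_map, List.length_range]
  have hlt : t - 1 < (List.insertionSort (· ≤ ·) L).length := by omega
  have hmem : (List.insertionSort (· ≤ ·) L).getD (t - 1) 0 ∈ List.insertionSort (· ≤ ·) L := by
    rw [List.getD_eq_getElem _ _ hlt]
    exact List.getElem_mem hlt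
  have hmem2 : (List.insertionSort (· ≤ ·) L).getD (t - 1) 0 ∈ L :=
    (List.perm_insertionSort (· ≤ ·) L).subset hmem
  rw [hL, List.mem_map] at hmem2
  obtain ⟨s, hs, hval⟩ := hmem2
  rw [List.mem_range] at hs
  exact ⟨s + 1, Finset.mem_Icc.mpr ⟨by omega, by omega⟩, hval⟩

lemma concomitant_eq' {Ω : Type*} (X Y : ℕ → Ω → ℝ) (n t : ℕ) (ω : Ω)
    (h1 : 1 ≤ t) (h2 : t ≤ n)
    (hdis : ∀ s s' : ℕ, s ∈ Finset.Icc 1 n → s' ∈ Finset.Icc 1 n → s ≠ s' → X s ω ≠ X s' ω) :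
    ∃ s ∈ Finset.Icc 1 n, concomitant X Y n t ω = Y s ω := by
  obtain ⟨s0, hs0, hval⟩ := orderStat_mem X n t ω h1 h2
  refine ⟨s0, hs0, ?_⟩
  rw [concomitant, Finset.sum_eq_single s0]
  · rw [if_pos hval, mul_one]
  · intro s hs hne
    rw [if_neg, mul_zero]
    rw [← hval]
    exact hdis s s0 hs hs0 hne
  · intro h; exact absurd hs0 h

theorem stmt_10 {Ω : Type*} [MeasurableSpace Ω] (P : Measure Ω) [IsProbabilityMeasure P]
    (X Y : ℕ → Ω → ℝ) (hmeasX : ∀ t, Measurable (X t)) (hmeasY : ∀ t, Measurable (Y t))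
    (hcdf : ∀ t : ℕ, 1 ≤ t → Continuous (cdfOf P (X t)))
    (hdist : ∀ s t : ℕ, 1 ≤ s → 1 ≤ t → s ≠ t → ∀ᵐ ω ∂P, X s ω ≠ X t ω)
    (hidY : ∀ t : ℕ, 1 ≤ t → IdentDistrib (Y t) (Y 1) P P)
    (p : ℝ) (hp : 1 ≤ p)
    (hmom : Integrable (fun ω => |Y 1 ω| ^ p) P)
    (hout : TendstoInProbAtTop P (fun n ω => (n : ℝ) ^ (-(1 / p)) *
      ∑ t ∈ Finset.Icc 2 n, |concomitant X Y n t ω - concomitant X Y n (t - 1) ω|)) :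
    TendstoInProb P
      (fun n ω =>
        (∑ t ∈ Finset.Icc 2 n,
          max (concomitant X Y n t ω - concomitant X Y n (t - 1) ω) 0) /
        (∑ t ∈ Finset.Icc 2 n,
          |concomitant X Y n t ω - concomitant X Y n (t - 1) ω|))
      (1 / 2) := by
  intro ε hε
  have hp0 : (0:ℝ) < p := lt_of_lt_of_le one_pos hp
  -- the bad (non-distinct) event
  set D : Set Ω := {ω | ∃ s t : ℕ, 1 ≤ s ∧ 1 ≤ t ∧ s ≠ t ∧ X s ω = X t ω} with hD
  have hDnull : P D = 0 := by
    have : D ⊆ ⋃ s : ℕ, ⋃ t : ℕ,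
        {ω | 1 ≤ s ∧ 1 ≤ t ∧ s ≠ t ∧ X s ω = X t ω} := by
      intro ω ⟨s, t, h⟩
      exact Set.mem_iUnion.mpr ⟨s, Set.mem_iUnion.mpr ⟨t, h⟩⟩
    refine measure_mono_null this (measure_iUnion_null fun s => measure_iUnion_null fun t => ?_)
    by_cases hc : 1 ≤ s ∧ 1 ≤ t ∧ s ≠ t
    · obtain ⟨h1, h2, h3⟩ := hc
      have hnull : P {ω | ¬ X s ω ≠ X t ω} = 0 := ae_iff.mp (hdist s t h1 h2 h3)
      refine measure_mono_null ?_ hnull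
      intro ω ⟨ha, hb, hcne, heq⟩
      simp [heq]
    · have : {ω | 1 ≤ s ∧ 1 ≤ t ∧ s ≠ t ∧ X s ω = X t ω} = (∅ : Set Ω) := by
        ext ω; simp only [Set.mem_setOf_eq, Set.mem_empty_iff_false, iff_false]
        intro ⟨h1, h2, h3, _⟩; exact hc ⟨h1, h2, h3⟩
      rw [this, measure_empty]
  -- notation
  set d : ℕ → ℕ → Ω → ℝ := fun n t ω =>
    concomitant X Y n t ω - concomitant X Y n (t - 1) ω with hd
  set T : ℕ → Ω → ℝ := fun n ω => ∑ t ∈ Finset.Icc 2 n, |d n t ω| with hTdef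
  set S : ℕ → Ω → ℝ := fun n ω => ∑ t ∈ Finset.Icc 2 n, d n t ω with hSdef
  -- sets
  set A : ℕ → Set Ω := fun n => {ω | (n : ℝ) ^ (-(1 / p)) * T n ω ≤ 1} with hA
  set B : ℕ → Set Ω := fun n =>
    ⋃ s ∈ Finset.Icc 1 n, {ω | ε * (n : ℝ) ^ (1 / p) ≤ |Y s ω|} with hB
  -- main inclusion for n ≥ 1
  have hincl : ∀ n : ℕ, 1 ≤ n →
      {ω | ε ≤ |((∑ t ∈ Finset.Icc 2 n, max (d n t ω) 0) / T n ω) - 1/2|}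
        ⊆ A n ∪ B n ∪ D := by
    intro n hn ω hω
    by_cases hAω : ω ∈ A n
    · exact Or.inl (Or.inl hAω)
    by_cases hDω : ω ∈ D
    · exact Or.inr hDω
    refine Or.inl (Or.inr ?_)
    -- from ¬A: T n ω > n^{1/p}
    have hnpos : (0:ℝ) < (n : ℝ) := by exact_mod_cast hn
    have hrpos : (0:ℝ) < (n : ℝ) ^ ((1:ℝ) / p) := Real.rpow_pos_of_pos hnpos _
    have hTgt : (n : ℝ) ^ ((1:ℝ) / p) < T n ω := by
      have h1 : 1 < (n : ℝ) ^ (-(1 / p)) * T n ω := lt_of_not_ge hAω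
      have hneg : (n : ℝ) ^ (-(1 / p)) = ((n : ℝ) ^ ((1:ℝ) / p))⁻¹ := by
        rw [Real.rpow_neg hnpos.le]
      rw [hneg, inv_mul_eq_div, lt_div_iff₀ hrpos, one_mul] at h1
      exact h1
    have hTpos : 0 < T n ω := lt_trans hrpos hTgt
    -- numerator identity
    have hN : (∑ t ∈ Finset.Icc 2 n, max (d n t ω) 0) = (S n ω + T n ω) / 2 := by
      rw [hSdef, hTdef]
      simp only
      rw [← Finset.sum_add_distrib, Finset.sum_div]
      exact Finset.sum_congr rfl fun t _ => max_half _
    -- ratio minus 1/2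
    have hR : ((∑ t ∈ Finset.Icc 2 n, max (d n t ω) 0) / T n ω) - 1/2
        = S n ω / (2 * T n ω) := by
      rw [hN]; field_simp; ring
    rw [Set.mem_setOf_eq, hR] at hω
    have habs : 2 * ε * ((n : ℝ) ^ ((1:ℝ) / p)) ≤ |S n ω| := by
      have h2T : 0 < 2 * T n ω := by linarith
      rw [abs_div, abs_of_pos h2T] at hω
      rw [le_div_iff₀ h2T] at hω
      nlinarith [hω, hTgt]
    -- telescoping and concomitant values
    have hdis : ∀ s s' : ℕ, s ∈ Finset.Icc 1 n → s' ∈ Finset.Icc 1 n → s ≠ s' →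
        X s ω ≠ X s' ω := by
      intro s s' hs hs' hne
      intro heq
      exact hDω ⟨s, s', (Finset.mem_Icc.mp hs).1, (Finset.mem_Icc.mp hs').1, hne, heq⟩
    have hStel : S n ω = concomitant X Y n n ω - concomitant X Y n 1 ω := by
      rw [hSdef]
      exact telescope_sum (fun t => concomitant X Y n t ω) n hn
    obtain ⟨a, ha, haeq⟩ := concomitant_eq' X Y n n ω hn le_rfl hdis
    obtain ⟨b, hb, hbeq⟩ := concomitant_eq' X Y n 1 ω le_rfl hn hdis
    have hSabs : |S n ω| ≤ |Y a ω| + |Y b ω| := by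
      rw [hStel, haeq, hbeq]
      exact abs_sub _ _
    -- one of them is large
    have : ε * (n : ℝ) ^ ((1:ℝ) / p) ≤ |Y a ω| ∨ ε * (n : ℝ) ^ ((1:ℝ) / p) ≤ |Y b ω| := by
      by_contra hcon
      push_neg at hcon
      nlinarith [hcon.1, hcon.2, habs, hSabs]
    rcases this with h | h
    · exact Set.mem_biUnion ha h
    · exact Set.mem_biUnion hb h
  -- bound P(B n)
  have hBle : ∀ n : ℕ, 1 ≤ n →
      P (B n) ≤ (n : ℝ≥0∞) * P {ω | ε ^ p * n ≤ |Y 1 ω| ^ p} := by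
    intro n hn
    have hnpos : (0:ℝ) < (n : ℝ) := by exact_mod_cast hn
    have hseteq : ∀ s : ℕ, {ω | ε * (n : ℝ) ^ ((1:ℝ) / p) ≤ |Y s ω|}
        = Y s ⁻¹' {x | ε ^ p * n ≤ |x| ^ p} := by
      intro s
      ext ω
      simp only [Set.mem_setOf_eq, Set.mem_preimage]
      have hb : (0:ℝ) ≤ ε * (n : ℝ) ^ ((1:ℝ) / p) :=
        mul_nonneg hε.le (Real.rpow_pos_of_pos hnpos _).le
      rw [← Real.rpow_le_rpow_iff hb (abs_nonneg _) hp0,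
        Real.mul_rpow hε.le (Real.rpow_pos_of_pos hnpos _).le,
        ← Real.rpow_mul hnpos.le, one_div_mul_cancel hp0.ne', Real.rpow_one]
    have hmset : MeasurableSet {x : ℝ | ε ^ p * n ≤ |x| ^ p} :=
      measurableSet_le measurable_const (measurable_id.abs.pow_const p)
    calc P (B n) ≤ ∑ s ∈ Finset.Icc 1 n, P {ω | ε * (n : ℝ) ^ ((1:ℝ) / p) ≤ |Y s ω|} :=
          measure_biUnion_finset_le _ _
      _ = ∑ s ∈ Finset.Icc 1 n, P {ω | ε ^ p * n ≤ |Y 1 ω| ^ p} := by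
          refine Finset.sum_congr rfl fun s hs => ?_
          rw [hseteq s]
          have := (hidY s (Finset.mem_Icc.mp hs).1).measure_mem_eq hmset
          rw [this]
          rfl
      _ = (n : ℝ≥0∞) * P {ω | ε ^ p * n ≤ |Y 1 ω| ^ p} := by
          rw [Finset.sum_const, Nat.card_Icc]
          simp [nsmul_eq_mul]
  -- the two tendsto facts
  have hAto : Tendsto (fun n => P (A n)) atTop (𝓝 0) := hout 1
  have hWto : Tendsto (fun n : ℕ => (n : ℝ≥0∞) * P {ω | ε ^ p * n ≤ |Y 1 ω| ^ p}) atTop (𝓝 0) :=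
    tail_tendsto P (fun ω => |Y 1 ω| ^ p) ((hmeasY 1).abs.pow_const p) hmom
      (ε ^ p) (Real.rpow_pos_of_pos hε _)
  have hsum : Tendsto (fun n => P (A n) + (n : ℝ≥0∞) * P {ω | ε ^ p * n ≤ |Y 1 ω| ^ p})
      atTop (𝓝 0) := by
    have := hAto.add hWto
    simpa using this
  refine tendsto_of_tendsto_of_tendsto_of_le_of_le' tendsto_const_nhds hsum
    (Eventually.of_forall fun n => zero_le) ?_
  filter_upwards [eventually_ge_atTop 1] with n hn
  calc P {ω | ε ≤ |((∑ t ∈ Finset.Icc 2 n, max (d n t ω) 0) / T n ω) - 1/2|}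
      ≤ P (A n ∪ B n ∪ D) := measure_mono (hincl n hn)
    _ ≤ P (A n ∪ B n) + P D := measure_union_le _ _
    _ = P (A n ∪ B n) := by rw [hDnull, add_zero]
    _ ≤ P (A n) + P (B n) := measure_union_le _ _
    _ ≤ P (A n) + (n : ℝ≥0∞) * P {ω | ε ^ p * n ≤ |Y 1 ω| ^ p} :=
        add_le_add_right (hBle n hn) _
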